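/- For every L ≤ 1.07 there exist real numbers g_1 ≥ g_2 > 0 and p_1, p_2 > 0 with p_1 + p_2 = 1 such that for every k ≥ 0 with k·p_1 ≤ 1 one has p_1/g_1 + (p_2/g_2)·exp( ( log(g_2/g_1)·k + (1/L)·ψ(k) )·p_1 ) > 1/(p_1 g_1 + p_2 g_2). In other words, the kernel lemma fails for every L ≤ 1.07 already with m = 2 atoms. -/

import Mathlib

/-- The function ψ from Talagrand's kernel lemma: ψ(x) = x²/4 for x ≤ 2, x − 1 for x ≥ 2. -/
noncomputable def psi (x : ℝ) : ℝ := if x ≤ 2 then x ^ 2 / 4 else x - 1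

/-- For every L ≤ 1.07 the kernel lemma fails already for m = 2 atoms: there are
g₁ ≥ g₂ > 0 and positive weights p₁ + p₂ = 1 such that no admissible k works. -/
theorem kernel_lemma_fails (L : ℝ) (hL0 : 0 < L) (hL : L ≤ 1.07) :
    ∃ g₁ g₂ p₁ p₂ : ℝ, g₂ ≤ g₁ ∧ 0 < g₂ ∧ 0 < p₁ ∧ 0 < p₂ ∧ p₁ + p₂ = 1 ∧
      ∀ k : ℝ, 0 ≤ k → k * p₁ ≤ 1 →
        1 / (p₁ * g₁ + p₂ * g₂) <
          p₁ / g₁ + (p₂ / g₂) *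
            Real.exp ((Real.log (g₂ / g₁) * k + (1 / L) * psi k) * p₁) := by
  refine ⟨1, 491/1250, 1/500, 499/500, by norm_num, by norm_num, by norm_num, by norm_num,
    by norm_num, ?_⟩
  intro k hk hkp
  have hq1 : ((491:ℝ)/1250) / 1 = 491/1250 := by norm_num
  rw [hq1]
  set s := Real.log ((491:ℝ)/1250) with hs_def
  -- Lower bound on s = log(491/1250): s ≥ -100/107
  have hexpB : (1250:ℝ)/491 ≤ Real.exp (100/107) := by
    have h1 : (1:ℝ) + 100/107/4096 ≤ Real.exp (100/107/4096) := by
      have := Real.add_one_le_exp ((100:ℝ)/107/4096); linarith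
    have h2 : ((1:ℝ) + 100/107/4096) ^ (4096:ℕ) ≤ Real.exp (100/107/4096) ^ (4096:ℕ) :=
      pow_le_pow_left₀ (by norm_num) h1 4096
    have h3 : Real.exp (100/107/4096) ^ (4096:ℕ) = Real.exp (100/107) := by
      rw [← Real.exp_nat_mul]; norm_num
    have h4 : (1250:ℝ)/491 ≤ ((1:ℝ) + 100/107/4096) ^ (4096:ℕ) := by
      have : ((1:ℝ) + 100/107/4096) = 109593/109568 := by norm_num
      rw [this, div_pow, le_div_iff₀ (by positivity), div_mul_eq_mul_div,
        div_le_iff₀ (by norm_num : (0:ℝ) < 491)]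
      rw [show (4096:ℕ) = 64 * 64 from rfl, pow_mul, pow_mul]
      norm_num
    calc (1250:ℝ)/491 ≤ ((1:ℝ) + 100/107/4096) ^ (4096:ℕ) := h4
      _ ≤ Real.exp (100/107/4096) ^ (4096:ℕ) := h2
      _ = Real.exp (100/107) := h3
  have hs1 : -(100/107) ≤ s := by
    rw [hs_def]
    rw [Real.le_log_iff_exp_le (by norm_num : (0:ℝ) < 491/1250)]
    rw [Real.exp_neg]
    have hpos : (0:ℝ) < 1250/491 := by norm_num
    have := inv_anti₀ hpos hexpB
    calc (Real.exp (100/107))⁻¹ ≤ ((1250:ℝ)/491)⁻¹ := this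
      _ = 491/1250 := by norm_num
  have hs0 : s < 0 := Real.log_neg (by norm_num) (by norm_num)
  have hs2 : s ^ 2 ≤ (100/107) ^ 2 := by nlinarith
  -- psi k is nonnegative
  have hpsi0 : 0 ≤ psi k := by
    unfold psi; split_ifs with h
    · positivity
    · push_neg at h; linarith
  -- (1/L) * psi k ≥ (100/107) * psi k
  have hL' : (100:ℝ)/107 ≤ 1/L := by
    rw [div_le_div_iff₀ (by norm_num) hL0]
    have : (1.07:ℝ) = 107/100 := by norm_num
    nlinarith
  have h6 : (100/107) * psi k ≤ (1/L) * psi k := mul_le_mul_of_nonneg_right hL' hpsi0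
  -- Key exponent lower bound
  have hE : -(10700/11449) ≤ s * k + (1/L) * psi k := by
    have key : -(10700/11449) ≤ s * k + (100/107) * psi k := by
      unfold psi; split_ifs with h
      · nlinarith [sq_nonneg (k + (214/100) * s)]
      · push_neg at h
        nlinarith [mul_nonneg (by linarith : (0:ℝ) ≤ s + 100/107) (by linarith : (0:ℝ) ≤ k - 2),
          sq_nonneg (s + 100/107)]
    linarith
  have hEp : -(107/57245) ≤ (s * k + (1/L) * psi k) * (1/500) := by
    nlinarith [hE]
  -- Lower bound the exponential by a rational number
  have hexp1 : ((915813:ℝ)/915920) ^ (16:ℕ) ≤ Real.exp (-(107/57245)) := by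
    have h1 : ((915813:ℝ)/915920) ≤ Real.exp (-(107/915920)) := by
      have := Real.add_one_le_exp (-(107:ℝ)/915920); 
      have heq : (-(107:ℝ)/915920) + 1 = 915813/915920 := by norm_num
      linarith [heq ▸ this]
    have h2 : ((915813:ℝ)/915920) ^ (16:ℕ) ≤ Real.exp (-(107/915920)) ^ (16:ℕ) :=
      pow_le_pow_left₀ (by norm_num) h1 16
    have h3 : Real.exp (-(107/915920)) ^ (16:ℕ) = Real.exp (-(107/57245)) := by
      rw [← Real.exp_nat_mul]; norm_num
    linarith [h3 ▸ h2]
  have hexp : ((915813:ℝ)/915920) ^ (16:ℕ) ≤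
      Real.exp ((s * k + (1/L) * psi k) * (1/500)) := by
    calc ((915813:ℝ)/915920) ^ (16:ℕ) ≤ Real.exp (-(107/57245)) := hexp1
      _ ≤ Real.exp ((s * k + (1/L) * psi k) * (1/500)) := Real.exp_le_exp.mpr hEp
  -- Final rational inequality
  have hc : (0:ℝ) < 499/500/(491/1250) := by norm_num
  have hmul : (499/500/(491/1250)) * ((915813:ℝ)/915920) ^ (16:ℕ) ≤
      (499/500/(491/1250)) * Real.exp ((s * k + (1/L) * psi k) * (1/500)) :=
    mul_le_mul_of_nonneg_left hexp (le_of_lt hc)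
  have hnum : 1 / ((1:ℝ)/500 * 1 + 499/500 * (491/1250)) <
      1/500/1 + (499/500/(491/1250)) * ((915813:ℝ)/915920) ^ (16:ℕ) := by
    norm_num
  linarith
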